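/- For λ ∈ (-1,1) and any N ≥ 3, the diagonal N×N matrix Θ with Θ₁₁ = Θ_NN = (1-λ)/(1+λ) and Θ_kk = 1 for 1 < k < N satisfies H(λ)† Θ = Θ H(λ), where H(λ) is the N×N discrete PT-symmetric square-well Hamiltonian. -/
import Mathlib


open Matrix Polynomial

/-- The N×N discrete PT-symmetric square-well Hamiltonian (0-indexed). -/
noncomputable def Ham (N : ℕ) (l : ℝ) : Matrix (Fin N) (Fin N) ℝ :=
  Matrix.of fun i j =>
    if (i : ℕ) = j then 2
    else if (j : ℕ) = (i : ℕ) + 1 then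
      (if (i : ℕ) = 0 then -1 - l else if (j : ℕ) = N - 1 then -1 + l else -1)
    else if (i : ℕ) = (j : ℕ) + 1 then
      (if (j : ℕ) = 0 then -1 + l else if (i : ℕ) = N - 1 then -1 - l else -1)
    else 0

/-- The diagonal metric with first and last entries (1-λ)/(1+λ). -/
noncomputable def Theta (N : ℕ) (l : ℝ) : Matrix (Fin N) (Fin N) ℝ :=
  Matrix.diagonal fun k => if (k : ℕ) = 0 ∨ (k : ℕ) = N - 1 then (1 - l) / (1 + l) else 1

set_option maxHeartbeats 2000000 in
theorem stmt3 (N : ℕ) (hN : 3 ≤ N) (l : ℝ) (hl : l ∈ Set.Ioo (-1 : ℝ) 1) :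
    (Ham N l)ᵀ * Theta N l = Theta N l * Ham N l := by
  have h1 : (1:ℝ) + l ≠ 0 := by have := hl.1; linarith
  ext i j
  have hi := i.isLt
  have hj := j.isLt
  simp only [Matrix.mul_diagonal, Matrix.diagonal_mul, Matrix.transpose_apply, Ham, Theta,
    Matrix.of_apply]
  split_ifs <;> first | rfl | (exfalso; omega) | ring1 | (field_simp; ring1)
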